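/- Let A be an n×n real matrix such that −A is exponentially stable (all eigenvalues of A have positive real part), and B an n×m real matrix such that there exists β > 0 with ∫_0^∞ ‖Bᵀ e^{−tAᵀ} y‖² dt ≥ β ‖y‖² for all y ∈ ℝⁿ. Then there exists a symmetric positive semidefinite matrix P solving the degenerate algebraic Riccati equation Aᵀ P + P A − P B Bᵀ P = 0 such that P is invertible and A − B Bᵀ P is exponentially stable (all eigenvalues have negative real part). -/

import Mathlib

open MeasureTheory Matrix

theorem rico_deriv {n : ℕ} (A C : Matrix (Fin n) (Fin n) ℝ) (y z : Fin n → ℝ) (t : ℝ) :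
    HasDerivAt (fun t : ℝ =>
        y ⬝ᵥ ((NormedSpace.exp ((-t) • A) * C * NormedSpace.exp ((-t) • Aᵀ)) *ᵥ z))
      (-((Aᵀ *ᵥ y) ⬝ᵥ ((NormedSpace.exp ((-t) • A) * C * NormedSpace.exp ((-t) • Aᵀ)) *ᵥ z)
        + y ⬝ᵥ ((NormedSpace.exp ((-t) • A) * C * NormedSpace.exp ((-t) • Aᵀ)) *ᵥ (Aᵀ *ᵥ z)))) t := by
  letI := Matrix.linftyOpNormedRing (α := ℝ) (n := Fin n)
  letI := Matrix.linftyOpNormedAlgebra (α := ℝ) (n := Fin n) (R := ℝ)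
  have hE : HasDerivAt (fun t : ℝ => NormedSpace.exp ((-t) • A))
      (-(A * NormedSpace.exp ((-t) • A))) t := by
    have h1 := hasDerivAt_exp_smul_const' (𝕂 := ℝ) A (-t)
    have h2 : HasDerivAt (fun t : ℝ => -t) (-1 : ℝ) t := hasDerivAt_neg t
    have h3 := h1.scomp t h2
    simp only [Function.comp_def, neg_smul, smul_neg, one_smul, neg_neg] at h3 ⊢
    convert h3 using 2 <;> rfl
  have hF : HasDerivAt (fun t : ℝ => NormedSpace.exp ((-t) • Aᵀ))
      (-(NormedSpace.exp ((-t) • Aᵀ) * Aᵀ)) t := by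
    have h1 := hasDerivAt_exp_smul_const (𝕂 := ℝ) Aᵀ (-t)
    have h2 : HasDerivAt (fun t : ℝ => -t) (-1 : ℝ) t := hasDerivAt_neg t
    have h3 := h1.scomp t h2
    simp only [Function.comp_def, neg_smul, smul_neg, one_smul, neg_neg] at h3 ⊢
    convert h3 using 2 <;> rfl
  have hM := (hE.mul (hasDerivAt_const t C)).mul hF
  set E := NormedSpace.exp ((-t) • A)
  set F := NormedSpace.exp ((-t) • Aᵀ)
  have hM' : HasDerivAt (fun t : ℝ =>
      NormedSpace.exp ((-t) • A) * C * NormedSpace.exp ((-t) • Aᵀ))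
      (-(A * (E * C * F)) - (E * C * F) * Aᵀ) t := by
    convert hM using 1
    on_goal -1 => simp only [Pi.mul_apply]; noncomm_ring
    all_goals rfl
  let L : Matrix (Fin n) (Fin n) ℝ →ₗ[ℝ] ℝ :=
    { toFun := fun N => y ⬝ᵥ (N *ᵥ z)
      map_add' := fun N N' => by simp [Matrix.add_mulVec, dotProduct_add]
      map_smul' := fun c N => by simp [Matrix.smul_mulVec, dotProduct_smul] }
  have hcomp := (LinearMap.toContinuousLinearMap L).hasFDerivAt.comp_hasDerivAt t hM'
  have key : ∀ N : Matrix (Fin n) (Fin n) ℝ,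
      y ⬝ᵥ ((-(A * N) - N * Aᵀ) *ᵥ z)
      = -((Aᵀ *ᵥ y) ⬝ᵥ (N *ᵥ z) + y ⬝ᵥ (N *ᵥ (Aᵀ *ᵥ z))) := by
    intro N
    rw [Matrix.sub_mulVec, Matrix.neg_mulVec, ← Matrix.mulVec_mulVec z A N,
      ← Matrix.mulVec_mulVec z N Aᵀ]
    rw [dotProduct_sub, dotProduct_neg, Matrix.dotProduct_mulVec y A,
      ← Matrix.mulVec_transpose]
    ring
  have := key (E * C * F)
  rw [← this]
  exact hcomp

theorem rico_limit_zero {g : ℝ → ℝ} (hg : IntegrableOn g (Set.Ioi 0))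
    (hpos : ∀ t, 0 ≤ g t) {L : ℝ} (hL : Filter.Tendsto g Filter.atTop (nhds L)) : L = 0 := by
  by_contra hne
  have hL0 : 0 ≤ L := ge_of_tendsto' hL fun t => hpos t
  have hLpos : 0 < L := lt_of_le_of_ne hL0 fun h => hne h.symm
  have hev : ∀ᶠ t in Filter.atTop, L / 2 ≤ g t := by
    have := hL (Ioi_mem_nhds (show L/2 < L by linarith))
    filter_upwards [this] with t ht
    exact (Set.mem_Ioi.1 ht).le
  obtain ⟨T, hT⟩ := hev.exists_forall_of_atTop
  set T' := max T 1 with hT'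
  have hsub : Set.Ioi T' ⊆ Set.Ioi (0:ℝ) := fun x hx =>
    lt_trans (lt_of_lt_of_le one_pos (le_max_right T 1)) hx
  have hg' : IntegrableOn g (Set.Ioi T') := hg.mono_set hsub
  have hconst : IntegrableOn (fun _ => L / 2) (Set.Ioi T') := by
    refine Integrable.mono' hg' aestronglyMeasurable_const ?_
    refine (ae_restrict_iff' measurableSet_Ioi).2 (Filter.Eventually.of_forall fun t ht => ?_)
    have := hT t (le_trans (le_max_left T 1) (le_of_lt ht))
    rw [Real.norm_eq_abs, abs_of_pos (by linarith)]
    exact this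
  rw [integrableOn_const_iff] at hconst
  rcases hconst with h | h
  · simp at h; linarith
  · simp [Real.volume_Ioi] at h

theorem rico_symm_eq_zero {n : ℕ} {S : Matrix (Fin n) (Fin n) ℝ} (hsymm : Sᵀ = S)
    (h : ∀ y : Fin n → ℝ, y ⬝ᵥ (S *ᵥ y) = 0) : S = 0 := by
  have key : ∀ y z : Fin n → ℝ, y ⬝ᵥ (S *ᵥ z) + z ⬝ᵥ (S *ᵥ y) = 0 := by
    intro y z
    have := h (y + z)
    rw [Matrix.mulVec_add, dotProduct_add, add_dotProduct,
      add_dotProduct, h y, h z] at this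
    linarith [this]
  ext i j
  have h1 := key (Pi.single i 1) (Pi.single j 1)
  have hsym : (Pi.single j (1:ℝ)) ⬝ᵥ (S *ᵥ Pi.single i 1)
      = (Pi.single i (1:ℝ)) ⬝ᵥ (S *ᵥ Pi.single j 1) := by
    rw [Matrix.dotProduct_mulVec, ← Matrix.mulVec_transpose, hsymm, dotProduct_comm]
  rw [hsym] at h1
  have : (Pi.single i (1:ℝ)) ⬝ᵥ (S *ᵥ Pi.single j 1) = S i j := by
    simp [dotProduct, Matrix.mulVec, Pi.single_apply, Finset.mul_sum]
  rw [this] at h1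
  simpa using by linarith [h1]
/-- finite-dimensional Riccati theorem: if `−A` is exponentially stable
(all eigenvalues of `A` have positive real part) and `(−A, B)` is exactly controllable
(the observability-type integral inequality holds), then the degenerate algebraic
Riccati equation `Aᵀ P + P A − P B Bᵀ P = 0` admits a symmetric positive semidefinite,
invertible solution `P` with `A − B Bᵀ P` exponentially stable. -/
theorem degenerate_riccati_finite_dim {n m : ℕ}
    (A : Matrix (Fin n) (Fin n) ℝ) (B : Matrix (Fin n) (Fin m) ℝ)
    (hA : ∀ μ ∈ spectrum ℂ (A.map (Complex.ofReal · )), 0 < μ.re)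
    (β : ℝ) (hβ : 0 < β)
    (hctrl : ∀ y : Fin n → ℝ,
      β * (∑ j, (y j) ^ 2) ≤
        ∫ t in Set.Ioi (0 : ℝ),
          ∑ i, ((Bᵀ *ᵥ (NormedSpace.exp ((-t) • Aᵀ) *ᵥ y)) i) ^ 2) :
    ∃ P : Matrix (Fin n) (Fin n) ℝ,
      P.PosSemidef ∧
      Aᵀ * P + P * A - P * B * Bᵀ * P = 0 ∧
      IsUnit P ∧
      ∀ μ ∈ spectrum ℂ ((A - B * Bᵀ * P).map (Complex.ofReal · )), μ.re < 0 := by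
  classical
  set C : Matrix (Fin n) (Fin n) ℝ := B * Bᵀ with hC
  set M : ℝ → Matrix (Fin n) (Fin n) ℝ := fun t =>
    NormedSpace.exp ((-t) • A) * C * NormedSpace.exp ((-t) • Aᵀ) with hM
  set q : (Fin n → ℝ) → (Fin n → ℝ) → ℝ → ℝ := fun y z t => y ⬝ᵥ (M t *ᵥ z) with hq
  -- transpose of the exponential
  have hEtrans : ∀ t : ℝ, (NormedSpace.exp ((-t) • A))ᵀ = NormedSpace.exp ((-t) • Aᵀ) := by
    intro t
    rw [← Matrix.transpose_smul, Matrix.exp_transpose]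
  have hMsymm : ∀ t, (M t)ᵀ = M t := by
    intro t
    simp only [hM]
    rw [Matrix.transpose_mul, Matrix.transpose_mul, hEtrans, ← hEtrans t, Matrix.transpose_transpose,
      hC, Matrix.transpose_mul, Matrix.transpose_transpose]
    noncomm_ring
  have hentry : ∀ (N : Matrix (Fin n) (Fin n) ℝ) (i j : Fin n),
      (Pi.single i 1) ⬝ᵥ (N *ᵥ Pi.single j 1) = N i j := by
    intro N i j
    simp [dotProduct, Matrix.mulVec, Pi.single_apply, Finset.mul_sum]
  have hqsymm : ∀ y z t, q y z t = q z y t := by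
    intro y z t
    simp only [hq]
    rw [Matrix.dotProduct_mulVec, ← Matrix.mulVec_transpose, hMsymm, dotProduct_comm]
  -- the quadratic form equals the integrand of hctrl
  have hq0 : ∀ (y : Fin n → ℝ) (t : ℝ),
      q y y t = ∑ i, ((Bᵀ *ᵥ (NormedSpace.exp ((-t) • Aᵀ) *ᵥ y)) i) ^ 2 := by
    intro y t
    simp only [hq, hM, hC]
    set E := NormedSpace.exp ((-t) • A)
    set F := NormedSpace.exp ((-t) • Aᵀ)
    rw [← Matrix.mulVec_mulVec y (E * (B * Bᵀ)) F]
    set u := F *ᵥ y with hu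
    rw [← Matrix.mulVec_mulVec u E (B * Bᵀ), Matrix.dotProduct_mulVec y E,
      ← Matrix.mulVec_transpose, hEtrans, ← hu,
      ← Matrix.mulVec_mulVec u B Bᵀ, Matrix.dotProduct_mulVec u B,
      ← Matrix.mulVec_transpose]
    simp [dotProduct, sq]
  -- nonnegativity
  have hqnn : ∀ y t, 0 ≤ q y y t := by
    intro y t
    rw [hq0]
    exact Finset.sum_nonneg fun i _ => sq_nonneg _
  -- derivative
  have hqderiv : ∀ y z t, HasDerivAt (q y z) (-(q (Aᵀ *ᵥ y) z t + q y (Aᵀ *ᵥ z) t)) t :=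
    fun y z t => rico_deriv A C y z t
  have hqcont : ∀ y z, Continuous (q y z) := fun y z =>
    continuous_iff_continuousAt.2 fun t => (hqderiv y z t).continuousAt
  -- integrability of diagonal terms
  have hint : ∀ y : Fin n → ℝ, IntegrableOn (q y y) (Set.Ioi 0) := by
    intro y
    by_cases hy : y = 0
    · subst hy
      have : q 0 0 = fun _ : ℝ => (0:ℝ) := by
        funext t; simp [hq]
      rw [this]
      exact integrableOn_zero
    · by_contra hni
      have h0 : (∫ t in Set.Ioi (0:ℝ), q y y t) = 0 := integral_undef hni
      have := hctrl y
      simp only [← hq0] at this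
      rw [h0] at this
      have hsum : 0 < ∑ j, (y j) ^ 2 := by
        obtain ⟨j, hj⟩ := Function.ne_iff.1 hy
        exact Finset.sum_pos' (fun i _ => sq_nonneg _)
          ⟨j, Finset.mem_univ j, by simpa [sq_abs] using pow_pos (abs_pos.2 hj) 2⟩
      nlinarith
  -- integrability of all q y z
  have hintq : ∀ y z, IntegrableOn (q y z) (Set.Ioi 0) := by
    intro y z
    have hptw : q y z = fun t => (q (y + z) (y + z) t - q y y t - q z z t) / 2 := by
      funext t
      have hbil : q (y + z) (y + z) t = q y y t + q y z t + q z y t + q z z t := by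
        simp only [hq]
        rw [Matrix.mulVec_add, dotProduct_add, add_dotProduct,
          add_dotProduct]
        ring
      rw [hbil, hqsymm z y]
      ring
    rw [hptw]
    exact (((hint (y + z)).sub (hint y)).sub (hint z)).div_const 2
  -- entry functions are integrable
  have hintE : ∀ i j : Fin n, IntegrableOn (fun t => M t i j) (Set.Ioi 0) := by
    intro i j
    have : (fun t => M t i j) = q (Pi.single i 1) (Pi.single j 1) := by
      funext t
      rw [hq]
      exact (hentry (M t) i j).symm
    rw [this]
    exact hintq _ _
  -- the candidate Gramian
  set Q : Matrix (Fin n) (Fin n) ℝ :=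
    Matrix.of (fun i j => ∫ t in Set.Ioi (0:ℝ), M t i j) with hQ
  have hexp : ∀ (N : Matrix (Fin n) (Fin n) ℝ) (y z : Fin n → ℝ),
      y ⬝ᵥ (N *ᵥ z) = ∑ i, ∑ j, y i * z j * N i j := by
    intro N y z
    simp only [dotProduct, Matrix.mulVec, Finset.mul_sum]
    exact Finset.sum_congr rfl fun i _ => Finset.sum_congr rfl fun j _ => by ring
  have hQform : ∀ y z : Fin n → ℝ,
      y ⬝ᵥ (Q *ᵥ z) = ∫ t in Set.Ioi (0:ℝ), q y z t := by
    intro y z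
    have h1 : ∀ t, q y z t = ∑ i, ∑ j, y i * z j * M t i j := by
      intro t; rw [hq]; exact hexp (M t) y z
    calc y ⬝ᵥ (Q *ᵥ z) = ∑ i, ∑ j, y i * z j * Q i j := hexp Q y z
      _ = ∑ i, ∑ j, ∫ t in Set.Ioi (0:ℝ), y i * z j * M t i j := by
          refine Finset.sum_congr rfl fun i _ => Finset.sum_congr rfl fun j _ => ?_
          rw [MeasureTheory.integral_const_mul]
          rfl
      _ = ∑ i, ∫ t in Set.Ioi (0:ℝ), ∑ j, y i * z j * M t i j := by
          refine Finset.sum_congr rfl fun i _ => ?_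
          rw [MeasureTheory.integral_finset_sum]
          exact fun j _ => ((hintE i j).const_mul _)
      _ = ∫ t in Set.Ioi (0:ℝ), ∑ i, ∑ j, y i * z j * M t i j := by
          rw [MeasureTheory.integral_finset_sum]
          intro i _
          exact MeasureTheory.integrable_finset_sum _ fun j _ => ((hintE i j).const_mul _)
      _ = ∫ t in Set.Ioi (0:ℝ), q y z t := by
          refine integral_congr_ae (Filter.Eventually.of_forall fun t => ?_)
          rw [h1]
  have hQsymm : Qᵀ = Q := by
    ext i j
    show (∫ t in Set.Ioi (0:ℝ), M t j i) = ∫ t in Set.Ioi (0:ℝ), M t i j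
    refine integral_congr_ae (Filter.Eventually.of_forall fun t => ?_)
    show M t j i = M t i j
    exact congrFun (congrFun (hMsymm t) i) j
  -- FTC: the Lyapunov identity in quadratic-form form
  have hFTC : ∀ y : Fin n → ℝ,
      (∫ t in Set.Ioi (0:ℝ), (q (Aᵀ *ᵥ y) y t + q y (Aᵀ *ᵥ y) t)) = y ⬝ᵥ (C *ᵥ y) := by
    intro y
    set D : ℝ → ℝ := fun t => q (Aᵀ *ᵥ y) y t + q y (Aᵀ *ᵥ y) t with hD
    have hDint : IntegrableOn D (Set.Ioi 0) := (hintq _ _).add (hintq _ _)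
    have hDcont : Continuous D := (hqcont _ _).add (hqcont _ _)
    have hFTCT : ∀ T : ℝ, (∫ t in (0:ℝ)..T, -(D t)) = q y y T - q y y 0 := by
      intro T
      refine intervalIntegral.integral_eq_sub_of_hasDerivAt (fun t _ => by
        have := hqderiv y y t
        simp only [hD]
        convert this using 1) (hDcont.neg.intervalIntegrable _ _)
    have htend := MeasureTheory.intervalIntegral_tendsto_integral_Ioi 0
      (hDint.neg) Filter.tendsto_id
    replace htend : Filter.Tendsto (fun T => q y y T - q y y 0) Filter.atTop
        (nhds (∫ t in Set.Ioi (0:ℝ), -(D t))) := by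
      refine htend.congr fun T => ?_
      simpa using hFTCT T
    have hgt : Filter.Tendsto (q y y) Filter.atTop
        (nhds ((∫ t in Set.Ioi (0:ℝ), -(D t)) + q y y 0)) := by
      have := htend.add_const (q y y 0)
      simpa using this
    have hL0 : (∫ t in Set.Ioi (0:ℝ), -(D t)) + q y y 0 = 0 :=
      rico_limit_zero (hint y) (hqnn y) hgt
    have hM0 : M 0 = C := by
      letI := Matrix.linftyOpNormedRing (α := ℝ) (n := Fin n)
      letI := Matrix.linftyOpNormedAlgebra (α := ℝ) (n := Fin n) (R := ℝ)
      show NormedSpace.exp ((-(0:ℝ)) • A) * C * NormedSpace.exp ((-(0:ℝ)) • Aᵀ) = C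
      rw [neg_zero, zero_smul, zero_smul, NormedSpace.exp_zero, Matrix.one_mul, Matrix.mul_one]
    have hq00 : q y y 0 = y ⬝ᵥ (C *ᵥ y) := by
      show y ⬝ᵥ (M 0 *ᵥ y) = _
      rw [hM0]
    rw [MeasureTheory.integral_neg] at hL0
    have : (∫ t in Set.Ioi (0:ℝ), D t) = y ⬝ᵥ (C *ᵥ y) := by rw [← hq00]; linarith
    exact this
  -- Lyapunov equation
  have hLyap : A * Q + Q * Aᵀ = C := by
    have hform : ∀ y : Fin n → ℝ, y ⬝ᵥ ((A * Q + Q * Aᵀ - C) *ᵥ y) = 0 := by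
      intro y
      rw [Matrix.sub_mulVec, Matrix.add_mulVec, dotProduct_sub, dotProduct_add]
      have h1 : y ⬝ᵥ ((A * Q) *ᵥ y) = ∫ t in Set.Ioi (0:ℝ), q (Aᵀ *ᵥ y) y t := by
        rw [← Matrix.mulVec_mulVec y A Q, Matrix.dotProduct_mulVec y A,
          ← Matrix.mulVec_transpose]
        exact hQform _ _
      have h2 : y ⬝ᵥ ((Q * Aᵀ) *ᵥ y) = ∫ t in Set.Ioi (0:ℝ), q y (Aᵀ *ᵥ y) t := by
        rw [← Matrix.mulVec_mulVec y Q Aᵀ]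
        exact hQform _ _
      rw [h1, h2, ← MeasureTheory.integral_add (hintq _ _) (hintq _ _), hFTC y]
      ring
    have hsymmS : (A * Q + Q * Aᵀ - C)ᵀ = A * Q + Q * Aᵀ - C := by
      rw [Matrix.transpose_sub, Matrix.transpose_add, Matrix.transpose_mul, Matrix.transpose_mul,
        Matrix.transpose_transpose, hQsymm, hC, Matrix.transpose_mul, Matrix.transpose_transpose]
      noncomm_ring
    have := rico_symm_eq_zero hsymmS hform
    rwa [sub_eq_zero] at this
  -- positive definiteness of Q
  have hQpos : Q.PosDef := by
    rw [Matrix.posDef_iff_dotProduct_mulVec]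
    constructor
    · show Qᴴ = Q
      have : Qᴴ = Qᵀ := by
        ext i j
        simp [Matrix.conjTranspose_apply]
      rw [this, hQsymm]
    · intro x hx
      have hsx : star x = x := by
        funext i; simp
      rw [hsx, hQform]
      have hle := hctrl x
      simp only [← hq0] at hle
      have hsum : 0 < ∑ j, (x j) ^ 2 := by
        obtain ⟨j, hj⟩ := Function.ne_iff.1 hx
        exact Finset.sum_pos' (fun i _ => sq_nonneg _)
          ⟨j, Finset.mem_univ j, by simpa [sq_abs] using pow_pos (abs_pos.2 hj) 2⟩
      have : (0:ℝ) < β * ∑ j, (x j) ^ 2 := mul_pos hβ hsum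
      linarith
  have hdet : IsUnit Q.det := isUnit_iff_ne_zero.2 (ne_of_gt hQpos.det_pos)
  have hQP : Q * Q⁻¹ = 1 := Matrix.mul_nonsing_inv Q hdet
  have hPQ : Q⁻¹ * Q = 1 := Matrix.nonsing_inv_mul Q hdet
  set P : Matrix (Fin n) (Fin n) ℝ := Q⁻¹ with hP
  have hPpos : P.PosDef := hQpos.inv
  refine ⟨P, hPpos.posSemidef, ?_, ?_, ?_⟩
  · -- Riccati equation
    have h0 : A * Q + Q * Aᵀ - C = 0 := sub_eq_zero.2 hLyap
    have : P * (A * Q + Q * Aᵀ - C) * P = 0 := by rw [h0, Matrix.mul_zero, Matrix.zero_mul]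
    calc Aᵀ * P + P * A - P * B * Bᵀ * P
        = P * (A * Q + Q * Aᵀ - C) * P := by
          have hPQX : ∀ X : Matrix (Fin n) (Fin n) ℝ, P * (Q * X) = X := fun X => by
            rw [← Matrix.mul_assoc, hPQ, Matrix.one_mul]
          have e1 : P * (A * Q) * P = P * A := by
            rw [Matrix.mul_assoc, Matrix.mul_assoc, hQP, Matrix.mul_one]
          have e2 : P * (Q * Aᵀ) * P = Aᵀ * P := by
            rw [Matrix.mul_assoc, Matrix.mul_assoc, hPQX]
          rw [Matrix.mul_sub, Matrix.mul_add, Matrix.sub_mul, Matrix.add_mul, e1, e2, hC]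
          simp only [← Matrix.mul_assoc]
          abel
      _ = 0 := this
  · exact isUnit_iff_ne_zero.2 (ne_of_gt hPpos.det_pos) |> (Matrix.isUnit_iff_isUnit_det P).2
  · -- stability
    have hclosed : A - B * Bᵀ * P = -(Q * (Aᵀ * P)) := by
      have : B * Bᵀ * P = A + Q * (Aᵀ * P) := by
        rw [show B * Bᵀ = C from rfl, ← hLyap, Matrix.add_mul, Matrix.mul_assoc A Q P, hQP,
          Matrix.mul_one, Matrix.mul_assoc]
      rw [this, sub_add_eq_sub_sub, sub_self, zero_sub]
    intro μ hμ
    rw [hclosed] at hμ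
    have hmapmul : ∀ (k : ℕ) (X : Matrix (Fin n) (Fin k) ℝ) (Y : Matrix (Fin k) (Fin n) ℝ),
        (X * Y).map (Complex.ofReal ·) = X.map (Complex.ofReal ·) * Y.map (Complex.ofReal ·) :=
      fun k X Y => Matrix.map_mul (f := Complex.ofRealHom)
    have hmapneg : ∀ X : Matrix (Fin n) (Fin n) ℝ,
        (-X).map (Complex.ofReal ·) = -(X.map (Complex.ofReal ·)) := by
      intro X; ext i j; simp
    set Ac : Matrix (Fin n) (Fin n) ℂ := A.map (Complex.ofReal ·) with hAc
    set Qc : Matrix (Fin n) (Fin n) ℂ := Q.map (Complex.ofReal ·) with hQc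
    set Pc : Matrix (Fin n) (Fin n) ℂ := P.map (Complex.ofReal ·) with hPc
    set Atc : Matrix (Fin n) (Fin n) ℂ := Aᵀ.map (Complex.ofReal ·) with hAtc
    have hone : (1 : Matrix (Fin n) (Fin n) ℝ).map (Complex.ofReal ·) = 1 :=
      Matrix.map_one _ Complex.ofReal_zero Complex.ofReal_one
    have hQcPc : Qc * Pc = 1 := by rw [hQc, hPc, ← hmapmul, hQP, hone]
    have hPcQc : Pc * Qc = 1 := by rw [hQc, hPc, ← hmapmul, hPQ, hone]
    rw [hmapneg, hmapmul, hmapmul] at hμ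
    have hμ' : ¬ IsUnit (algebraMap ℂ (Matrix (Fin n) (Fin n) ℂ) μ - -(Qc * (Atc * Pc))) :=
      spectrum.mem_iff.1 hμ
    have hkey : algebraMap ℂ (Matrix (Fin n) (Fin n) ℂ) μ - -(Qc * (Atc * Pc))
        = Qc * ((algebraMap ℂ (Matrix (Fin n) (Fin n) ℂ) μ + Atc) * Pc) := by
      rw [sub_neg_eq_add, Matrix.add_mul, Matrix.mul_add,
        ← Matrix.mul_assoc Qc (algebraMap ℂ (Matrix (Fin n) (Fin n) ℂ) μ) Pc,
        ← Algebra.commutes μ Qc,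
        Matrix.mul_assoc (algebraMap ℂ (Matrix (Fin n) (Fin n) ℂ) μ) Qc Pc, hQcPc,
        Matrix.mul_one]
    rw [hkey] at hμ'
    have hQcu : IsUnit Qc := (Matrix.isUnit_iff_isUnit_det Qc).2 (Matrix.isUnit_det_of_left_inverse hPcQc)
    have hPcu : IsUnit Pc := (Matrix.isUnit_iff_isUnit_det Pc).2 (Matrix.isUnit_det_of_left_inverse hQcPc)
    have hnu : ¬ IsUnit (algebraMap ℂ (Matrix (Fin n) (Fin n) ℂ) μ + Atc) := by
      intro hu
      exact hμ' (hQcu.mul (hu.mul hPcu))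
    have hneg : algebraMap ℂ (Matrix (Fin n) (Fin n) ℂ) μ + Atc
        = -(algebraMap ℂ (Matrix (Fin n) (Fin n) ℂ) (-μ) - Atc) := by
      rw [map_neg, neg_sub, sub_neg_eq_add, add_comm]
    rw [hneg, IsUnit.neg_iff] at hnu
    have htr : algebraMap ℂ (Matrix (Fin n) (Fin n) ℂ) (-μ) - Atc
        = (algebraMap ℂ (Matrix (Fin n) (Fin n) ℂ) (-μ) - Ac)ᵀ := by
      rw [Matrix.transpose_sub, hAtc, Matrix.transpose_map, hAc,
        Algebra.algebraMap_eq_smul_one, Matrix.transpose_smul, Matrix.transpose_one,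
        ← Algebra.algebraMap_eq_smul_one]
    rw [htr] at hnu
    have hnu' : ¬ IsUnit (algebraMap ℂ (Matrix (Fin n) (Fin n) ℂ) (-μ) - Ac) := by
      intro hu
      apply hnu
      rw [Matrix.isUnit_iff_isUnit_det, Matrix.det_transpose, ← Matrix.isUnit_iff_isUnit_det]
      exact hu
    have hmem : -μ ∈ spectrum ℂ Ac := spectrum.mem_iff.2 hnu'
    have := hA (-μ) hmem
    simp only [Complex.neg_re] at this
    linarith
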